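/- Let k be a field and b₀ a positive integer. Set S = k[x,v]/(x^{b₀+1}(x+v³)) and let S′ be the localization of S away from the image of the element x + v³. Then the annihilator of the element x^{b₀} ∈ S′ is contained in the nilradical of S′; equivalently, the support of the S′-module generated by x^{b₀} is all of Spec S′, i.e., the image of x^{b₀} in the localization of S′ at every prime ideal is nonzero. -/

import Mathlib

open MvPolynomial

set_option maxHeartbeats 1000000

/-- Generic localization lemma: if `S'` is the localization of `Q` away from `w`,
`x ^ (b₀+1) * w = 0` in `Q`, and every `f` with `w ^ j * (f * x ^ b₀) = 0` is a
multiple of `x`, then any annihilator of `x ^ b₀` in `S'` is nilpotent. -/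
theorem aux_loc {Q S' : Type*} [CommRing Q] [CommRing S'] [Algebra Q S']
    (b₀ : ℕ) (w x : Q) [IsLocalization.Away w S']
    (hxw : x ^ (b₀ + 1) * w = 0)
    (hann : ∀ f : Q, (∃ j : ℕ, w ^ j * (f * x ^ b₀) = 0) → ∃ f', f = x * f') :
    ∀ a : S', a * (algebraMap Q S' x) ^ b₀ = 0 → a ∈ nilradical S' := by
  intro a ha
  have hwu : IsUnit (algebraMap Q S' w) :=
    IsLocalization.map_units (M := Submonoid.powers w) S' ⟨w, Submonoid.mem_powers _⟩
  have hx : (algebraMap Q S' x) ^ (b₀ + 1) = 0 := by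
    refine hwu.mul_left_eq_zero.1 ?_
    rw [← map_pow, ← map_mul, hxw, map_zero]
  obtain ⟨⟨f, m⟩, hrm⟩ := IsLocalization.surj (Submonoid.powers w) a
  have h1 : algebraMap Q S' (f * x ^ b₀) = 0 := by
    rw [map_mul, map_pow]
    calc algebraMap Q S' f * (algebraMap Q S' x) ^ b₀
        = (a * (algebraMap Q S' x) ^ b₀) * algebraMap Q S' ↑m := by rw [← hrm]; ring
    _ = 0 := by rw [ha, zero_mul]
  obtain ⟨m', hm'⟩ := (IsLocalization.map_eq_zero_iff (Submonoid.powers w) S' _).1 h1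
  obtain ⟨j, hj⟩ := m'.2
  obtain ⟨f', rfl⟩ := hann f ⟨j, by
    have hj' : w ^ j = (↑m' : Q) := hj
    rw [hj']; exact hm'⟩
  obtain ⟨u, hu⟩ := IsLocalization.map_units (M := Submonoid.powers w) S' m
  have ha' : a = algebraMap Q S' x * (algebraMap Q S' f' * ↑u⁻¹) := by
    have h2 : a * ↑u = algebraMap Q S' x * algebraMap Q S' f' := by
      rw [hu, hrm, map_mul]
    calc a = a * ↑u * ↑u⁻¹ := by rw [mul_assoc, u.mul_inv, mul_one]
    _ = algebraMap Q S' x * (algebraMap Q S' f' * ↑u⁻¹) := by rw [h2]; ring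
  exact mem_nilradical.mpr ⟨b₀ + 1, by rw [ha', mul_pow, hx, zero_mul]⟩

/-- **Support statement in Lemma `MainLemma`.**
Let `k` be a field and `b₀ > 0`, `S = k[x,v]/(x^{b₀+1}(x+v³))` and `S′ = S[1/(x+v³)]`.
The annihilator of `x^{b₀} ∈ S′` is contained in the nilradical of `S′`; equivalently,
the support of the `S′`-module generated by `x^{b₀}` is all of `Spec S′`.
(Variables: `0 = x`, `1 = v`.) -/
theorem annihilator_pow_x_le_nilradical
    (k : Type*) [Field k] (b₀ : ℕ) (hb₀ : 0 < b₀)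
    (J : Ideal (MvPolynomial (Fin 2) k))
    (hJ : J = Ideal.span {X 0 ^ (b₀ + 1) * (X 0 + X 1 ^ 3)})
    (ξ : Localization.Away (Ideal.Quotient.mk J (X 0 + X 1 ^ 3)))
    (hξ : ξ = algebraMap (MvPolynomial (Fin 2) k ⧸ J)
      (Localization.Away (Ideal.Quotient.mk J (X 0 + X 1 ^ 3)))
      (Ideal.Quotient.mk J (X 0))) :
    ∀ a : Localization.Away (Ideal.Quotient.mk J (X 0 + X 1 ^ 3)),
      a * ξ ^ b₀ = 0 → a ∈ nilradical
        (Localization.Away (Ideal.Quotient.mk J (X 0 + X 1 ^ 3))) := by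
  intro a ha
  rw [hξ] at ha
  refine aux_loc b₀ (Ideal.Quotient.mk J (X 0 + X 1 ^ 3)) (Ideal.Quotient.mk J (X 0))
    ?_ ?_ a ha
  · -- (mk X₀) ^ (b₀+1) * mk (X₀ + X₁³) = 0 in the quotient
    have hmem : (X 0 : MvPolynomial (Fin 2) k) ^ (b₀ + 1) * (X 0 + X 1 ^ 3) ∈ J :=
      hJ ▸ Ideal.subset_span rfl
    rw [← map_pow, ← map_mul, Ideal.Quotient.eq_zero_iff_mem]
    exact hmem
  · -- annihilator condition in the quotient ring
    have hp : Prime (X 0 : MvPolynomial (Fin 2) k) := by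
      rw [← MulEquiv.prime_iff (e := (MvPolynomial.finSuccEquiv k 1).toMulEquiv)]
      simpa [MvPolynomial.finSuccEquiv_X_zero] using Polynomial.prime_X
    have hnd : ¬ (X 0 : MvPolynomial (Fin 2) k) ∣ X 0 + X 1 ^ 3 := by
      intro h
      have h' : (X 0 : MvPolynomial (Fin 2) k) ∣ X 1 ^ 3 := (dvd_add_right dvd_rfl).mp h
      rw [X_pow_eq_monomial, X_dvd_monomial] at h'
      simp at h'
    rintro fq ⟨j, hjq⟩
    obtain ⟨f, rfl⟩ := Ideal.Quotient.mk_surjective fq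
    rw [← map_pow, ← map_pow, ← map_mul, ← map_mul, Ideal.Quotient.eq_zero_iff_mem] at hjq
    rw [hJ, Ideal.mem_span_singleton] at hjq
    obtain ⟨g, hg⟩ := hjq
    have hcancel : (X 0 + X 1 ^ 3 : MvPolynomial (Fin 2) k) ^ j * f
        = X 0 * ((X 0 + X 1 ^ 3) * g) := by
      have hXb : (X 0 : MvPolynomial (Fin 2) k) ^ b₀ ≠ 0 := pow_ne_zero _ (X_ne_zero _)
      apply mul_right_cancel₀ hXb
      calc (X 0 + X 1 ^ 3 : MvPolynomial (Fin 2) k) ^ j * f * X 0 ^ b₀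
          = (X 0 + X 1 ^ 3) ^ j * (f * X 0 ^ b₀) := by ring
      _ = X 0 ^ (b₀ + 1) * (X 0 + X 1 ^ 3) * g := hg
      _ = X 0 * ((X 0 + X 1 ^ 3) * g) * X 0 ^ b₀ := by ring
    have hdvd : (X 0 : MvPolynomial (Fin 2) k) ∣ f := by
      rcases hp.2.2 _ _ ⟨_, hcancel⟩ with h | h
      · exact absurd (hp.dvd_of_dvd_pow h) hnd
      · exact h
    obtain ⟨f', rfl⟩ := hdvd
    exact ⟨Ideal.Quotient.mk J f', by rw [map_mul]⟩
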